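/- Let d ≥ 2, let U ⊆ ℝ^d be an open connected set, and let f : U → ℝ^d be twice continuously differentiable with ε(f)(y) = 0 for every y ∈ U, where ε(f) = (Df + Dfᵀ)/2 is the symmetric gradient. Then there exist a skew-symmetric matrix A ∈ ℝ^{d×d} (Aᵀ = −A) and a vector b ∈ ℝ^d such that f(y) = A y + b for all y ∈ U. In other words, the kernel of the symmetric gradient consists exactly of the rigid velocities r(y) = Ay + b with A skew-symmetric. -/

import Mathlib

open Matrix

lemma const_on_of_fderiv_zero_aux {E F : Type*} [NormedAddCommGroup E] [NormedSpace ℝ E]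
    [NormedAddCommGroup F] [NormedSpace ℝ F] {U : Set E} (hU : IsOpen U)
    (hconn : IsPreconnected U) {g : E → F}
    (hg : ∀ y ∈ U, HasFDerivAt g (0 : E →L[ℝ] F) y) :
    ∀ x ∈ U, ∀ y ∈ U, g x = g y := by
  have key : ∀ z ∈ U, ∀ᶠ w in nhds z, g w = g z := by
    intro z hz
    obtain ⟨ε, εpos, hball⟩ := Metric.isOpen_iff.1 hU z hz
    filter_upwards [Metric.ball_mem_nhds z εpos] with w hw
    refine (convex_ball z ε).is_const_of_fderivWithin_eq_zero (𝕜 := ℝ) (f := g) ?_ ?_ hw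
      (Metric.mem_ball_self εpos)
    · exact fun u hu => ((hg u (hball hu)).differentiableAt).differentiableWithinAt
    · intro u hu
      rw [fderivWithin_of_isOpen Metric.isOpen_ball hu]
      exact (hg u (hball hu)).fderiv
  intro x hx y hy
  by_contra hne
  have h1 : IsOpen {z | z ∈ U ∧ g z = g x} := by
    rw [isOpen_iff_mem_nhds]
    intro z hz
    filter_upwards [key z hz.1, hU.mem_nhds hz.1] with w hw hwU
    exact ⟨hwU, hw.trans hz.2⟩
  have h2 : IsOpen {z | z ∈ U ∧ g z ≠ g x} := by
    rw [isOpen_iff_mem_nhds]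
    intro z hz
    filter_upwards [key z hz.1, hU.mem_nhds hz.1] with w hw hwU
    exact ⟨hwU, hw.trans_ne hz.2⟩
  obtain ⟨w, -, hw1, hw2⟩ := hconn _ _ h1 h2
    (fun z hz => by by_cases h : g z = g x <;> [exact Or.inl ⟨hz, h⟩; exact Or.inr ⟨hz, h⟩])
    ⟨x, hx, hx, rfl⟩ ⟨y, hy, hy, fun h => hne h.symm⟩
  exact hw2.2 hw1.2

lemma snd_fderiv_zero_aux {d : ℕ} (U : Set (Fin d → ℝ)) (hU : IsOpen U)
    (f : (Fin d → ℝ) → (Fin d → ℝ)) (hf : ContDiffOn ℝ 2 f U)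
    (hsym : ∀ y ∈ U, ∀ i j : Fin d,
      fderiv ℝ f y (Pi.single i 1) j + fderiv ℝ f y (Pi.single j 1) i = 0)
    (y : Fin d → ℝ) (hy : y ∈ U) :
    fderiv ℝ (fderiv ℝ f) y = 0 := by
  set P : Fin d → (Fin d → ℝ) := fun i => Pi.single i (1 : ℝ) with hP
  have hfy : ContDiffAt ℝ 2 f y := hf.contDiffAt (hU.mem_nhds hy)
  have hD : DifferentiableAt ℝ (fderiv ℝ f) y :=
    (hfy.fderiv_right (m := 1) le_rfl).differentiableAt one_ne_zero
  have hS : IsSymmSndFDerivAt ℝ f y := hfy.isSymmSndFDerivAt (by simp [minSmoothness_of_isRCLikeNormedField])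
  set h := fderiv ℝ (fderiv ℝ f) y with hh
  have key : ∀ i j k : Fin d, h (P k) (P i) j + h (P k) (P j) i = 0 := by
    intro i j k
    let L : Fin d → Fin d → (((Fin d → ℝ) →L[ℝ] (Fin d → ℝ)) →L[ℝ] ℝ) := fun i j =>
      (ContinuousLinearMap.proj (R := ℝ) (φ := fun _ : Fin d => ℝ) j).comp
        (ContinuousLinearMap.apply ℝ (Fin d → ℝ) (P i))
    have h₁ : HasFDerivAt (fun z => L i j (fderiv ℝ f z)) ((L i j).comp h) y :=
      (L i j).hasFDerivAt.comp y hD.hasFDerivAt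
    have h₂ : HasFDerivAt (fun z => L j i (fderiv ℝ f z)) ((L j i).comp h) y :=
      (L j i).hasFDerivAt.comp y hD.hasFDerivAt
    have hadd := h₁.add h₂
    have hev : (fun z => L i j (fderiv ℝ f z) + L j i (fderiv ℝ f z)) =ᶠ[nhds y]
        fun _ => (0 : ℝ) := by
      filter_upwards [hU.mem_nhds hy] with z hz
      exact hsym z hz i j
    have h0 : HasFDerivAt (fun z => L i j (fderiv ℝ f z) + L j i (fderiv ℝ f z))
        (0 : (Fin d → ℝ) →L[ℝ] ℝ) y :=
      (hasFDerivAt_const (0 : ℝ) y).congr_of_eventuallyEq hev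
    have huniq := hadd.unique h0
    have := congrArg (fun T : (Fin d → ℝ) →L[ℝ] ℝ => T (P k)) huniq
    simpa [L] using this
  have hcomp : ∀ k i j : Fin d, h (P k) (P i) j = 0 := by
    intro k i j
    have e1 : h (P k) (P i) j = h (P i) (P k) j := by rw [hS.eq (P k) (P i)]
    have e2 : h (P i) (P k) j + h (P i) (P j) k = 0 := key k j i
    have e3 : h (P i) (P j) k = h (P j) (P i) k := by rw [hS.eq (P i) (P j)]
    have e4 : h (P j) (P i) k + h (P j) (P k) i = 0 := key i k j
    have e5 : h (P j) (P k) i = h (P k) (P j) i := by rw [hS.eq (P j) (P k)]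
    have e6 : h (P k) (P i) j + h (P k) (P j) i = 0 := key i j k
    linarith
  apply ContinuousLinearMap.coe_injective
  apply Module.Basis.ext (Pi.basisFun ℝ (Fin d))
  intro k
  simp only [ContinuousLinearMap.coe_coe, LinearMap.zero_apply, Pi.basisFun_apply]
  apply ContinuousLinearMap.coe_injective
  apply Module.Basis.ext (Pi.basisFun ℝ (Fin d))
  intro i
  simp only [ContinuousLinearMap.coe_coe, LinearMap.zero_apply, Pi.basisFun_apply]
  funext j
  exact hcomp k i j

/-- The kernel of the symmetric gradient consists exactly of rigid velocities:
if `f` is `C²` on an open connected set `U ⊆ ℝ^d` (`d ≥ 2`) and its symmetric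
gradient `ε(f) = (Df + Dfᵀ)/2` vanishes on `U`, then `f(y) = A y + b` on `U`
for some skew-symmetric matrix `A` and vector `b`. -/
theorem statement_0 {d : ℕ} (hd : 2 ≤ d) (U : Set (Fin d → ℝ))
    (hU : IsOpen U) (hconn : IsConnected U)
    (f : (Fin d → ℝ) → (Fin d → ℝ)) (hf : ContDiffOn ℝ 2 f U)
    (hsym : ∀ y ∈ U, ∀ i j : Fin d,
      fderiv ℝ f y (Pi.single i 1) j + fderiv ℝ f y (Pi.single j 1) i = 0) :
    ∃ A : Matrix (Fin d) (Fin d) ℝ, Aᵀ = -A ∧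
      ∃ b : Fin d → ℝ, ∀ y ∈ U, f y = A.mulVec y + b := by
  obtain ⟨y₀, hy₀⟩ := hconn.nonempty
  have hDg : ∀ y ∈ U, DifferentiableAt ℝ (fderiv ℝ f) y := fun y hy =>
    (((hf.contDiffAt (hU.mem_nhds hy)).fderiv_right (m := 1) le_rfl)).differentiableAt one_ne_zero
  have hgzero : ∀ y ∈ U, HasFDerivAt (fderiv ℝ f)
      (0 : (Fin d → ℝ) →L[ℝ] ((Fin d → ℝ) →L[ℝ] (Fin d → ℝ))) y := by
    intro y hy
    have := (hDg y hy).hasFDerivAt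
    rwa [snd_fderiv_zero_aux U hU f hf hsym y hy] at this
  have hgconst := const_on_of_fderiv_zero_aux hU hconn.isPreconnected hgzero
  set A : Matrix (Fin d) (Fin d) ℝ :=
    Matrix.of fun i j => fderiv ℝ f y₀ (Pi.single j 1) i with hA
  have hApply : ∀ v, fderiv ℝ f y₀ v = A.mulVec v := by
    intro v
    have hv : v = ∑ j, v j • (Pi.single j (1 : ℝ) : Fin d → ℝ) := by
      ext k
      simp [Pi.single_apply]
    funext i
    conv_lhs => rw [hv]
    rw [map_sum]
    simp only [_root_.map_smul]
    simp [A, Matrix.mulVec, dotProduct, mul_comm]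
  set M : (Fin d → ℝ) →L[ℝ] (Fin d → ℝ) := LinearMap.toContinuousLinearMap A.mulVecLin with hM
  have hMv : ∀ v, M v = A.mulVec v := fun v => rfl
  have hfM : ∀ y ∈ U, HasFDerivAt f M y := by
    intro y hy
    have hdf : DifferentiableAt ℝ f y :=
      (hf.contDiffAt (hU.mem_nhds hy)).differentiableAt two_ne_zero
    have : fderiv ℝ f y = M := by
      rw [hgconst y hy y₀ hy₀]
      exact ContinuousLinearMap.ext fun v => (hApply v).trans (hMv v).symm
    rw [← this]
    exact hdf.hasFDerivAt
  have hF : ∀ y ∈ U, HasFDerivAt (fun y => f y - M y)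
      (0 : (Fin d → ℝ) →L[ℝ] (Fin d → ℝ)) y := by
    intro y hy
    simpa using (hfM y hy).sub M.hasFDerivAt
  have hFconst := const_on_of_fderiv_zero_aux hU hconn.isPreconnected hF
  refine ⟨A, ?_, f y₀ - A.mulVec y₀, ?_⟩
  · ext i j
    have := hsym y₀ hy₀ j i
    simp only [Matrix.transpose_apply, Matrix.neg_apply, hA, Matrix.of_apply]
    linarith
  · intro y hy
    have := hFconst y hy y₀ hy₀
    simp only [hMv] at this
    funext i
    have hi := congrFun this i
    simp only [Pi.sub_apply, Pi.add_apply] at hi ⊢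
    linarith
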